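/- Let 0 < p < ∞ and 0 < q < ∞. Then ℓ_{p,q} has absolutely continuous norm: for every u ∈ ℓ_{p,q}, the tails u_n := (0,...,0, u(n+1), u(n+2), ...) satisfy ‖u_n‖_{p,q} → 0 as n → ∞. -/

import Mathlib

open Filter MeasureTheory Set
open scoped ENNReal NNReal Topology

/-- Non-increasing rearrangement of a sequence (0-indexed: `rearr u j` is the
`(j+1)`-th largest value of `|u|`). -/
noncomputable def rearr (u : ℕ → ℝ) (j : ℕ) : ℝ :=
  sInf {t : ℝ | 0 ≤ t ∧ Set.encard {i : ℕ | t < |u i|} ≤ (j : ℕ∞)}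

/-- Lorentz sequence quasi-norm `‖u‖_{p,q}` for `q < ∞`. -/
noncomputable def lorentzNorm (p q : ℝ) (u : ℕ → ℝ) : ℝ≥0∞ :=
  (∑' j : ℕ, ENNReal.ofReal (((j : ℝ) + 1) ^ (q / p - 1) * rearr u j ^ q)) ^ (1 / q)

/-- Lorentz sequence quasi-norm `‖u‖_{p,∞}`. -/
noncomputable def lorentzNormInf (p : ℝ) (u : ℕ → ℝ) : ℝ≥0∞ :=
  ⨆ j : ℕ, ENNReal.ofReal (((j : ℝ) + 1) ^ (1 / p) * rearr u j)

/-- Lorentz sequence quasi-norm with extended second index. -/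
noncomputable def lorentzNormE (p : ℝ) (q : ℝ≥0∞) (u : ℕ → ℝ) : ℝ≥0∞ :=
  if q = ⊤ then lorentzNormInf p u else lorentzNorm p q.toReal u

lemma rearr_nonneg (u : ℕ → ℝ) (j : ℕ) : 0 ≤ rearr u j :=
  Real.sInf_nonneg fun _ ht => ht.1

lemma rearr_bddBelow (u : ℕ → ℝ) (j : ℕ) :
    BddBelow {t : ℝ | 0 ≤ t ∧ Set.encard {i : ℕ | t < |u i|} ≤ (j : ℕ∞)} :=
  ⟨0, fun _ ht => ht.1⟩

lemma rearr_mono {u v : ℕ → ℝ} (h : ∀ i, |v i| ≤ |u i|) (j : ℕ)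
    (hne : {t : ℝ | 0 ≤ t ∧ Set.encard {i : ℕ | t < |u i|} ≤ (j : ℕ∞)}.Nonempty) :
    rearr v j ≤ rearr u j := by
  refine csInf_le_csInf (rearr_bddBelow v j) hne ?_
  rintro t ⟨ht0, hte⟩
  refine ⟨ht0, le_trans (Set.encard_mono ?_) hte⟩
  intro i hi
  exact lt_of_lt_of_le hi (h i)

lemma summable_of_tsum_ofReal_ne_top {g : ℕ → ℝ} (hg : ∀ j, 0 ≤ g j)
    (h : (∑' j, ENNReal.ofReal (g j)) ≠ ⊤) : Summable g := by
  have h' : (∑' j, ((g j).toNNReal : ℝ≥0∞)) ≠ ⊤ := h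
  have h2 := ENNReal.tsum_coe_ne_top_iff_summable.mp h'
  have h3 := NNReal.summable_coe.mpr h2
  exact h3.congr fun j => Real.coe_toNNReal _ (hg j)

/-- `ℓ_{p,q}` (with `0 < p,q < ∞`) has absolutely continuous norm: the tails of
any element tend to zero in the quasi-norm. -/
theorem lorentz_abs_continuous (p q : ℝ) (hp : 0 < p) (hq : 0 < q)
    (u : ℕ → ℝ) (hu : lorentzNorm p q u ≠ ⊤) :
    Filter.Tendsto (fun n : ℕ => lorentzNorm p q (fun i => if i < n then 0 else u i))
      Filter.atTop (nhds 0) := by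
  set r : ℝ := q / p - 1 with hr
  have hq1 : (0:ℝ) < 1 / q := by positivity
  by_cases hbd : ∃ t : ℝ, 0 ≤ t ∧ ({i : ℕ | t < |u i|}).Finite
  · -- main case
    obtain ⟨t0, ht00, hfin0⟩ := hbd
    obtain ⟨T, hT⟩ := (hfin0.image fun i => |u i|).bddAbove
    set tS : ℝ := max t0 T with htS
    have hempty : {i : ℕ | tS < |u i|} = ∅ := by
      ext i
      simp only [mem_setOf_eq, mem_empty_iff_false, iff_false, not_lt]
      by_cases h : t0 < |u i|
      · exact le_max_of_le_right (hT (mem_image_of_mem _ h))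
      · exact le_trans (not_lt.mp h) (le_max_left _ _)
    have hne : ∀ j : ℕ,
        {t : ℝ | 0 ≤ t ∧ Set.encard {i : ℕ | t < |u i|} ≤ (j : ℕ∞)}.Nonempty := by
      intro j
      exact ⟨tS, le_trans ht00 (le_max_left _ _), by simp [hempty]⟩
    -- the dominating sequence
    set B : ℕ → ℝ := fun j => ((j : ℝ) + 1) ^ r * rearr u j ^ q with hB
    have hB0 : ∀ j, 0 ≤ B j := by
      intro j
      have h1 := rearr_nonneg u j
      have h2 : (0:ℝ) < (j : ℝ) + 1 := by positivity
      positivity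
    have hsum_ne_top : (∑' j : ℕ, ENNReal.ofReal (B j)) ≠ ⊤ := by
      intro h
      apply hu
      rw [lorentzNorm, ← hr]
      have h' : (∑' j : ℕ, ENNReal.ofReal (((j : ℝ) + 1) ^ r * rearr u j ^ q)) = ⊤ := h
      rw [h', ENNReal.top_rpow_of_pos hq1]
    have hBsummable : Summable B := summable_of_tsum_ofReal_ne_top hB0 hsum_ne_top
    -- all strictly positive level sets of `u` are finite
    have hfin : ∀ t : ℝ, 0 < t → ({i : ℕ | t < |u i|}).Finite := by
      intro t ht
      by_contra hinf
      have hinf' : ({i : ℕ | t < |u i|}).Infinite := hinf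
      have hlow : ∀ j : ℕ, t ≤ rearr u j := by
        intro j
        refine le_csInf (hne j) ?_
        rintro s ⟨hs0, hse⟩
        by_contra hlt
        push_neg at hlt
        have hsub : {i : ℕ | t < |u i|} ⊆ {i : ℕ | s < |u i|} := by
          intro i hi
          exact lt_trans hlt hi
        rw [(hinf'.mono hsub).encard_eq] at hse
        simp at hse
      have h2 : ¬ Summable (fun j : ℕ => ((j : ℝ) + 1) ^ r * t ^ q) := by
        intro hs
        have htq : (0:ℝ) < t ^ q := Real.rpow_pos_of_pos ht q
        have h3 : Summable (fun j : ℕ => ((j : ℝ) + 1) ^ r) := by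
          have := hs.mul_right (t ^ q)⁻¹
          refine this.congr fun j => ?_
          field_simp
        have h4 : Summable (fun j : ℕ => (j : ℝ) ^ r) := by
          rw [← summable_nat_add_iff 1]
          refine h3.congr fun j => ?_
          push_cast
          ring_nf
        have h5 := Real.summable_nat_rpow.mp h4
        have h6 : (0:ℝ) < q / p := by positivity
        rw [hr] at h5
        linarith
      apply h2
      refine hBsummable.of_nonneg_of_le (fun j => ?_) (fun j => ?_)
      · have h2 : (0:ℝ) < (j : ℝ) + 1 := by positivity
        positivity
      · refine mul_le_mul_of_nonneg_left ?_ ?_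
        · exact Real.rpow_le_rpow ht.le (hlow j) hq.le
        · exact (Real.rpow_pos_of_pos (by positivity) r).le
    -- tails
    set v : ℕ → ℕ → ℝ := fun n i => if i < n then 0 else u i with hv
    have hvle : ∀ n i, |v n i| ≤ |u i| := by
      intro n i
      by_cases h : i < n <;> simp [hv, h, abs_nonneg]
    -- pointwise convergence of rearrangements of tails
    have hptw : ∀ j : ℕ, Tendsto (fun n => rearr (v n) j) atTop (𝓝 0) := by
      intro j
      rw [Metric.tendsto_atTop]
      intro ε hε
      obtain ⟨N, hN⟩ := (hfin (ε / 2) (by linarith)).bddAbove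
      refine ⟨N + 1, fun n hn => ?_⟩
      have hmem : ε / 2 ∈
          {t : ℝ | 0 ≤ t ∧ Set.encard {i : ℕ | t < |v n i|} ≤ (j : ℕ∞)} := by
        refine ⟨by linarith, ?_⟩
        have : {i : ℕ | ε / 2 < |v n i|} = ∅ := by
          ext i
          simp only [mem_setOf_eq, mem_empty_iff_false, iff_false, not_lt]
          by_cases h : i < n
          · simp [hv, h]; linarith
          · simp only [hv, if_neg h]
            by_contra hc
            push_neg at hc
            have hiS : i ∈ {i : ℕ | ε / 2 < |u i|} := hc
            have := hN hiS
            omega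
        simp [this]
      have h1 : rearr (v n) j ≤ ε / 2 := csInf_le (rearr_bddBelow _ _) hmem
      have h2 := rearr_nonneg (v n) j
      rw [Real.dist_eq, sub_zero, abs_of_nonneg h2]
      linarith
    -- per-term convergence
    set F : ℕ → ℕ → ℝ := fun n j => ((j : ℝ) + 1) ^ r * rearr (v n) j ^ q with hF
    have hterm : ∀ j : ℕ, Tendsto (fun n => F n j) atTop (𝓝 0) := by
      intro j
      have hc : Tendsto (fun n => rearr (v n) j ^ q) atTop (𝓝 ((0:ℝ) ^ q)) :=
        ((Real.continuousAt_rpow_const 0 q (Or.inr hq.le)).tendsto).comp (hptw j)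
      rw [Real.zero_rpow hq.ne'] at hc
      have := hc.const_mul (((j : ℝ) + 1) ^ r)
      simpa using this
    -- domination
    have hbound : ∀ n j, ‖F n j‖ ≤ B j := by
      intro n j
      have hF0 : 0 ≤ F n j := by
        have h1 := rearr_nonneg (v n) j
        have h2 : (0:ℝ) < (j : ℝ) + 1 := by positivity
        positivity
      rw [Real.norm_eq_abs, abs_of_nonneg hF0]
      refine mul_le_mul_of_nonneg_left ?_ (Real.rpow_pos_of_pos (by positivity) r).le
      exact Real.rpow_le_rpow (rearr_nonneg _ _) (rearr_mono (hvle n) j (hne j)) hq.le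
    have hFsummable : ∀ n, Summable (F n) := fun n =>
      hBsummable.of_nonneg_of_le
        (fun j => by
          have h1 := rearr_nonneg (v n) j
          have h2 : (0:ℝ) < (j : ℝ) + 1 := by positivity
          positivity)
        (fun j => le_trans (le_abs_self _) (by simpa [Real.norm_eq_abs] using hbound n j))
    -- dominated convergence for the sums
    have hS : Tendsto (fun n => ∑' j, F n j) atTop (𝓝 0) := by
      have := tendsto_tsum_of_dominated_convergence (f := F) (g := fun _ => 0)
        hBsummable hterm (Eventually.of_forall hbound)
      simpa using this
    -- assemble
    have hnorm_eq : ∀ n, lorentzNorm p q (v n)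
        = ENNReal.ofReal ((∑' j, F n j) ^ (1 / q)) := by
      intro n
      rw [lorentzNorm, ← hr]
      have h1 : (∑' j : ℕ, ENNReal.ofReal (((j : ℝ) + 1) ^ r * rearr (v n) j ^ q))
          = ENNReal.ofReal (∑' j, F n j) := by
        rw [← ENNReal.ofReal_tsum_of_nonneg (fun j => ?_) (hFsummable n)]
        have h1 := rearr_nonneg (v n) j
        have h2 : (0:ℝ) < (j : ℝ) + 1 := by positivity
        positivity
      rw [h1, ← ENNReal.ofReal_rpow_of_nonneg ?_ hq1.le]
      exact tsum_nonneg fun j => by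
        have h1 := rearr_nonneg (v n) j
        have h2 : (0:ℝ) < (j : ℝ) + 1 := by positivity
        positivity
    have hfin2 : Tendsto (fun n => (∑' j, F n j) ^ (1 / q)) atTop (𝓝 ((0:ℝ) ^ (1 / q))) :=
      ((Real.continuousAt_rpow_const 0 (1 / q) (Or.inr hq1.le)).tendsto).comp hS
    rw [Real.zero_rpow hq1.ne'] at hfin2
    have hfin3 : Tendsto (fun n => ENNReal.ofReal ((∑' j, F n j) ^ (1 / q))) atTop (𝓝 0) := by
      have := (ENNReal.continuous_ofReal.tendsto 0).comp hfin2
      simpa [Function.comp_def] using this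
    exact hfin3.congr fun n => (hnorm_eq n).symm
  · -- degenerate case: all nonnegative level sets are infinite; all rearrangements vanish
    push_neg at hbd
    have hzero : ∀ n j, rearr (fun i => if i < n then 0 else u i) j = 0 := by
      intro n j
      have hempty : {t : ℝ | 0 ≤ t ∧
          Set.encard {i : ℕ | t < |if i < n then 0 else u i|} ≤ (j : ℕ∞)} = ∅ := by
        ext t
        simp only [mem_setOf_eq, mem_empty_iff_false, iff_false, not_and]
        intro ht0 hte
        have hfin' : ({i : ℕ | t < |if i < n then 0 else u i|}).Finite := by
          rw [← Set.encard_lt_top_iff]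
          exact lt_of_le_of_lt hte (by simp)
        have hsub : {i : ℕ | t < |u i|} ⊆
            {i : ℕ | t < |if i < n then 0 else u i|} ∪ Set.Iio n := by
          intro i hi
          by_cases h : i < n
          · exact Or.inr h
          · exact Or.inl (by simpa [h] using hi)
        exact hbd t ht0 ((hfin'.union (Set.finite_Iio n)).subset hsub)
      rw [rearr, hempty, Real.sInf_empty]
    have hnorm : ∀ n, lorentzNorm p q (fun i => if i < n then 0 else u i) = 0 := by
      intro n
      rw [lorentzNorm]
      have h1 : ∀ j : ℕ, ENNReal.ofReal (((j : ℝ) + 1) ^ (q / p - 1)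
          * rearr (fun i => if i < n then 0 else u i) j ^ q) = 0 := by
        intro j
        rw [hzero n j, Real.zero_rpow hq.ne', mul_zero, ENNReal.ofReal_zero]
      rw [tsum_congr h1, tsum_zero, ENNReal.zero_rpow_of_pos hq1]
    simp only [hnorm]
    exact tendsto_const_nhds
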